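/- In the n-vertex Nash bargaining counterexample instance, the symmetric Nash product g(y) = (1 − (n−1)y)·((n−1)y)·y^{n−1} over y ∈ [0, 1/(n−1)] is maximized at y = n/(n²−1), and consequently at the Nash bargaining solution, agent i receives utility 1/(n+1) while agent i' receives u_i-value n/(n+1), i.e., u_i·x_i = (1/n)·u_i·x_{i'}, even though every agent in B weakly prefers i to i'. -/

import Mathlib

def isPM {n : ℕ} (x : Fin n → Fin n → ℝ) : Prop :=
  (∀ i j, 0 ≤ x i j) ∧ (∀ i, ∑ j, x i j = 1) ∧ (∀ j, ∑ i, x i j = 1)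

def utilA {n : ℕ} (u x : Fin n → Fin n → ℝ) (i : Fin n) : ℝ := ∑ j, u i j * x i j

def utilB {n : ℕ} (w x : Fin n → Fin n → ℝ) (j : Fin n) : ℝ := ∑ i, w j i * x i j

/-- Side-A utilities of the counterexample instance on `n = m + 2` agents per side:
special agents `i = 0` and `i' = 1` have utility 1 for `j = 0` and 0 otherwise;
the dummy agents have identical utilities (1 for everyone in B). -/
def uCE (m : ℕ) : Fin (m + 2) → Fin (m + 2) → ℝ := fun i j =>
  if i = 0 ∨ i = 1 then (if j = 0 then 1 else 0) else 1

/-- Side-B utilities: every agent in `B \ {j}` (i.e. `j ≠ 0`) has utility 1 for `i = 0`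
and 0 for everyone else; agent `j = 0` has identical utilities for everyone. -/
def wCE (m : ℕ) : Fin (m + 2) → Fin (m + 2) → ℝ := fun j i =>
  if j = 0 then 1 else (if i = 0 then 1 else 0)

/-! ### Auxiliary lemmas -/

lemma amgmCE (k : ℕ) (c : Fin k → ℝ) (hc : ∀ i, 0 ≤ c i) :
    ∏ i, c i ≤ ((∑ i, c i) / k) ^ k := by
  rcases Nat.eq_zero_or_pos k with hk | hk
  · subst hk; simp
  have hk0 : (0:ℝ) < k := by exact_mod_cast hk
  have hprod : (0:ℝ) ≤ ∏ i, c i := Finset.prod_nonneg fun i _ => hc i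
  have h := Real.geom_mean_le_arith_mean_weighted Finset.univ (fun _ => 1/(k:ℝ)) c
      (fun i _ => by positivity)
      (by simp [Finset.sum_const, Finset.card_univ]; field_simp)
      (fun i _ => hc i)
  rw [Real.finset_prod_rpow _ _ (fun i _ => hc i)] at h
  have hsum : ∑ i, (1/(k:ℝ)) * c i = (∑ i, c i) / k := by
    rw [← Finset.mul_sum]; ring
  rw [hsum] at h
  have h2 : ((∏ i, c i) ^ ((1:ℝ)/k)) ^ k ≤ ((∑ i, c i) / k) ^ k :=
    pow_le_pow_left₀ (Real.rpow_nonneg hprod _) h k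
  calc ∏ i, c i = ((∏ i, c i) ^ ((1:ℝ)/k)) ^ k := by
        rw [← Real.rpow_natCast ((∏ i, c i) ^ ((1:ℝ)/k)) k, ← Real.rpow_mul hprod]
        rw [one_div, inv_mul_cancel₀ hk0.ne', Real.rpow_one]
    _ ≤ _ := h2

noncomputable def fCE (m : ℕ) : ℝ → ℝ := fun y => y^(m+2) - ((m:ℝ)+1)*y^(m+3)

lemma fCE_eq (m : ℕ) (y : ℝ) : fCE m y = (1 - ((m:ℝ)+1)*y) * y^(m+2) := by
  unfold fCE; rw [pow_succ y (m+2)]; ring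

lemma fCE_deriv (m : ℕ) (y : ℝ) :
    HasDerivAt (fCE m) (y^(m+1) * (((m:ℝ)+2) - ((m:ℝ)+1)*((m:ℝ)+3)*y)) y := by
  have h1 := hasDerivAt_pow (m+2) y
  have h2 := (hasDerivAt_pow (m+3) y).const_mul (((m:ℝ)+1))
  have h : HasDerivAt (fCE m) _ y := h1.sub h2
  convert h using 1
  have e1 : m + 2 - 1 = m + 1 := rfl
  have e2 : m + 3 - 1 = m + 2 := rfl
  rw [e1, e2, pow_succ y (m+1)]
  push_cast; ring

lemma ystar_mem (m : ℕ) :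
    (0:ℝ) < ((m:ℝ)+2)/((((m:ℝ)+1))*((m:ℝ)+3)) ∧
    ((m:ℝ)+2)/((((m:ℝ)+1))*((m:ℝ)+3)) < 1/((m:ℝ)+1) := by
  constructor
  · positivity
  · rw [div_lt_div_iff₀ (by positivity) (by positivity)]
    nlinarith [Nat.cast_nonneg (α := ℝ) m]

lemma fkeyCE (m : ℕ) {y : ℝ} (h0 : 0 ≤ y) (h1 : y ≤ 1/((m:ℝ)+1)) :
    fCE m y ≤ fCE m (((m:ℝ)+2)/((((m:ℝ)+1))*((m:ℝ)+3))) ∧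
    (fCE m y = fCE m (((m:ℝ)+2)/((((m:ℝ)+1))*((m:ℝ)+3))) →
      y = ((m:ℝ)+2)/((((m:ℝ)+1))*((m:ℝ)+3))) := by
  set M : ℝ := (m:ℝ) with hM
  set t : ℝ := (M+2)/((M+1)*(M+3)) with ht
  obtain ⟨ht0, ht1⟩ := ystar_mem m
  have hcont : Continuous (fCE m) := by unfold fCE; continuity
  have hmono : StrictMonoOn (fCE m) (Set.Icc 0 t) := by
    apply strictMonoOn_of_deriv_pos (convex_Icc 0 t) hcont.continuousOn
    intro z hz
    rw [interior_Icc] at hz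
    rw [(fCE_deriv m z).deriv]
    have hz0 : 0 < z := hz.1
    have hzt : z < t := hz.2
    have : (M+1)*(M+3)*z < M+2 := by
      have := (lt_div_iff₀ (by positivity : (0:ℝ) < (M+1)*(M+3))).mp hzt
      linarith [this]
    exact mul_pos (pow_pos hz0 _) (by linarith)
  have hanti : StrictAntiOn (fCE m) (Set.Icc t (1/(M+1))) := by
    apply strictAntiOn_of_deriv_neg (convex_Icc _ _) hcont.continuousOn
    intro z hz
    rw [interior_Icc] at hz
    rw [(fCE_deriv m z).deriv]
    have hz0 : 0 < z := lt_trans ht0 hz.1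
    have : M+2 < (M+1)*(M+3)*z := by
      have := (div_lt_iff₀ (by positivity : (0:ℝ) < (M+1)*(M+3))).mp hz.1
      linarith [this]
    exact mul_neg_of_pos_of_neg (pow_pos hz0 _) (by linarith)
  rcases le_or_gt y t with hc | hc
  · constructor
    · exact hmono.monotoneOn ⟨h0, hc⟩ ⟨le_of_lt ht0, le_refl t⟩ hc
    · intro heq
      by_contra hne
      have : y < t := lt_of_le_of_ne hc hne
      exact absurd heq (ne_of_lt (hmono ⟨h0, hc⟩ ⟨le_of_lt ht0, le_refl t⟩ this))
  · constructor
    · exact hanti.antitoneOn ⟨le_refl t, le_of_lt ht1⟩ ⟨le_of_lt hc, h1⟩ (le_of_lt hc)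
    · intro heq
      exact absurd heq.symm (ne_of_gt (hanti ⟨le_refl t, le_of_lt ht1⟩ ⟨le_of_lt hc, h1⟩ hc))

lemma gformCE (m : ℕ) (y : ℝ) :
    (1 - ((m:ℝ)+1)*y) * (((m:ℝ)+1)*y) * y^(m+1) = ((m:ℝ)+1) * fCE m y := by
  rw [fCE_eq, pow_succ y (m+1)]; ring

lemma utilA_specialCE (m : ℕ) (x : Fin (m+2) → Fin (m+2) → ℝ) (i : Fin (m+2))
    (hi : i = 0 ∨ i = 1) : (∑ j, uCE m i j * x i j) = x i 0 := by
  unfold uCE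
  simp only [if_pos hi, ite_mul, one_mul, zero_mul]
  simp

lemma nashprodCE (m : ℕ) (x : Fin (m+2) → Fin (m+2) → ℝ)
    (hrow : ∀ i, ∑ j, x i j = 1) (hcol : ∀ j, ∑ i, x i j = 1) :
    (∏ i, utilA (uCE m) x i) * (∏ j, utilB (wCE m) x j)
      = x 0 0 * x 1 0 * ∏ j : Fin (m+1), x 0 j.succ := by
  have hA : ∏ i, utilA (uCE m) x i = x 0 0 * x 1 0 := by
    rw [Fin.prod_univ_succ, Fin.prod_univ_succ]
    have h0 : utilA (uCE m) x 0 = x 0 0 := utilA_specialCE m x 0 (Or.inl rfl)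
    have h1 : utilA (uCE m) x (0:Fin (m+1)).succ = x 1 0 := by
      rw [Fin.succ_zero_eq_one]; exact utilA_specialCE m x 1 (Or.inr rfl)
    have hd : ∀ i : Fin m, utilA (uCE m) x i.succ.succ = 1 := by
      intro i
      unfold utilA uCE
      have : ¬((i.succ.succ : Fin (m+2)) = 0 ∨ (i.succ.succ : Fin (m+2)) = 1) := by
        rintro (h | h)
        · exact Fin.succ_ne_zero _ h
        · have := Fin.succ_injective _ (h.trans (Fin.succ_zero_eq_one).symm)
          exact Fin.succ_ne_zero _ this
      simp only [if_neg this, one_mul]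
      exact hrow _
    rw [h0, h1, Finset.prod_congr rfl (fun i _ => hd i), Finset.prod_const_one]
    ring
  have hB : ∏ j, utilB (wCE m) x j = ∏ j : Fin (m+1), x 0 j.succ := by
    rw [Fin.prod_univ_succ]
    have h0 : utilB (wCE m) x 0 = 1 := by
      unfold utilB wCE
      simp only [if_pos rfl]
      simpa using hcol 0
    have hj : ∀ j : Fin (m+1), utilB (wCE m) x j.succ = x 0 j.succ := by
      intro j
      unfold utilB wCE
      simp only [if_neg (Fin.succ_ne_zero j), ite_mul, one_mul, zero_mul]
      simp
    rw [h0, Finset.prod_congr rfl (fun j _ => hj j), one_mul]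
  rw [hA, hB]

noncomputable def zCE (m : ℕ) : Fin (m+2) → Fin (m+2) → ℝ := fun i j =>
  if i = 0 then (if j = 0 then 1/((m:ℝ)+3) else ((m:ℝ)+2)/(((m:ℝ)+1)*((m:ℝ)+3)))
  else if i = 1 then (if j = 0 then ((m:ℝ)+2)/((m:ℝ)+3) else 1/(((m:ℝ)+1)*((m:ℝ)+3)))
  else (if j = 0 then 0 else 1/((m:ℝ)+1))

lemma zCE_isPM (m : ℕ) : isPM (zCE m) := by
  have hm : (0:ℝ) ≤ (m:ℝ) := Nat.cast_nonneg m
  refine ⟨?_, ?_, ?_⟩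
  · intro i j
    unfold zCE
    split_ifs <;> positivity
  · intro i
    rw [Fin.sum_univ_succ]
    unfold zCE
    by_cases hi0 : i = 0
    · simp only [hi0, if_pos rfl, if_neg (Fin.succ_ne_zero _)]
      rw [Finset.sum_const, Finset.card_univ, Fintype.card_fin, nsmul_eq_mul]
      push_cast; field_simp; ring
    · by_cases hi1 : i = 1
      · simp only [hi0, hi1, if_neg, if_pos rfl, reduceIte, if_neg (Fin.succ_ne_zero _),
          if_neg (show (1:Fin (m+2)) ≠ 0 by simp)]
        rw [Finset.sum_const, Finset.card_univ, Fintype.card_fin, nsmul_eq_mul]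
        push_cast; field_simp; ring
      · simp only [hi0, hi1, reduceIte, if_pos rfl, if_neg (Fin.succ_ne_zero _)]
        rw [Finset.sum_const, Finset.card_univ, Fintype.card_fin, nsmul_eq_mul]
        push_cast; field_simp; norm_num
  · intro j
    rw [Fin.sum_univ_succ, Fin.sum_univ_succ]
    unfold zCE
    have h1 : ((0:Fin (m+1)).succ : Fin (m+2)) = 1 := Fin.succ_zero_eq_one
    have hne : ∀ i : Fin m, ¬(i.succ.succ : Fin (m+2)) = 0 := fun i => Fin.succ_ne_zero _
    have hne1 : ∀ i : Fin m, ¬(i.succ.succ : Fin (m+2)) = 1 := by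
      intro i h
      exact Fin.succ_ne_zero _ (Fin.succ_injective _ (h.trans Fin.succ_zero_eq_one.symm))
    simp only [h1, if_pos rfl, if_neg (Fin.succ_ne_zero (0:Fin (m+1))), reduceIte, hne, hne1,
      if_false, if_true]
    by_cases hj : j = 0
    · simp only [hj, if_pos rfl, ↓reduceIte, if_neg (show (1:Fin (m+2)) ≠ 0 by simp)]
      rw [Finset.sum_const, Finset.card_univ, Fintype.card_fin, nsmul_eq_mul]
      field_simp; ring
    · simp only [if_neg hj, if_neg (show (1:Fin (m+2)) ≠ 0 by simp)]
      rw [Finset.sum_const, Finset.card_univ, Fintype.card_fin, nsmul_eq_mul]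
      field_simp; ring

/-- with `n = m + 2`, the symmetric Nash product
g(y) = (1 − (n−1)y)·((n−1)y)·y^{n−1} on [0, 1/(n−1)] is maximized at
y = n/(n²−1); consequently at the Nash bargaining solution agent i gets
utility 1/(n+1), agent i' holds u_i-value n/(n+1), so
u_i·x_i = (1/n)·u_i·x_{i'}, even though every agent in B weakly prefers i to i'. -/
theorem nash_strong_justified_envy (m : ℕ) :
    (∀ y : ℝ, 0 ≤ y → y ≤ 1 / ((m : ℝ) + 1) →
      (1 - ((m : ℝ) + 1) * y) * (((m : ℝ) + 1) * y) * y ^ (m + 1) ≤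
      (1 - ((m : ℝ) + 1) * (((m : ℝ) + 2) / (((m : ℝ) + 2) ^ 2 - 1))) *
        (((m : ℝ) + 1) * (((m : ℝ) + 2) / (((m : ℝ) + 2) ^ 2 - 1))) *
        (((m : ℝ) + 2) / (((m : ℝ) + 2) ^ 2 - 1)) ^ (m + 1)) ∧
    ∀ x : Fin (m + 2) → Fin (m + 2) → ℝ, isPM x →
      (∀ z, isPM z →
        (∏ i, utilA (uCE m) z i) * (∏ j, utilB (wCE m) z j) ≤
        (∏ i, utilA (uCE m) x i) * (∏ j, utilB (wCE m) x j)) →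
      utilA (uCE m) x 0 = 1 / ((m : ℝ) + 3) ∧
      (∑ j, uCE m 0 j * x 1 j) = ((m : ℝ) + 2) / ((m : ℝ) + 3) ∧
      utilA (uCE m) x 0 = (1 / ((m : ℝ) + 2)) * ∑ j, uCE m 0 j * x 1 j ∧
      ∀ j : Fin (m + 2), wCE m j 1 ≤ wCE m j 0 := by
  have hsq : ((m:ℝ)+2)^2 - 1 = ((m:ℝ)+1)*((m:ℝ)+3) := by ring
  set M : ℝ := (m:ℝ) with hM
  have hm : (0:ℝ) ≤ M := Nat.cast_nonneg m
  set t : ℝ := (M+2)/((M+1)*(M+3)) with ht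
  obtain ⟨ht0, ht1⟩ := ystar_mem m
  constructor
  · intro y h0 h1
    rw [hsq]
    rw [gformCE m y, gformCE m t]
    exact mul_le_mul_of_nonneg_left (fkeyCE m h0 h1).1 (by positivity)
  · intro x hx hmax
    obtain ⟨hpos, hrow, hcol⟩ := hx
    set a : ℝ := x 0 0 with ha'
    set b : ℝ := x 1 0 with hb'
    set c : Fin (m+1) → ℝ := fun j => x 0 j.succ with hc'
    have hP : (∏ i, utilA (uCE m) x i) * (∏ j, utilB (wCE m) x j) = a * b * ∏ j, c j :=
      nashprodCE m x hrow hcol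
    -- Nash product of the explicit optimum
    have hz := hmax (zCE m) (zCE_isPM m)
    have hzrow := (zCE_isPM m).2.1
    have hzcol := (zCE_isPM m).2.2
    have hPz : (∏ i, utilA (uCE m) (zCE m) i) * (∏ j, utilB (wCE m) (zCE m) j)
        = (M+1) * fCE m t := by
      rw [nashprodCE m (zCE m) hzrow hzcol]
      have hz00 : zCE m 0 0 = 1/(M+3) := by simp [zCE, hM]
      have hz10 : zCE m 1 0 = (M+2)/(M+3) := by simp [zCE, hM]
      have hz0j : ∀ j : Fin (m+1), zCE m 0 j.succ = t := by
        intro j; simp [zCE, Fin.succ_ne_zero, ht, hM]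
      rw [hz00, hz10, Finset.prod_congr rfl (fun j _ => hz0j j), Finset.prod_const,
        Finset.card_univ, Fintype.card_fin]
      rw [← gformCE m t]
      have h1t : (M+1)*t = (M+2)/(M+3) := by
        rw [ht]; field_simp
      have h2t : 1 - (M+1)*t = 1/(M+3) := by
        rw [h1t]; field_simp; norm_num
      rw [h2t, h1t]
    rw [hP, hPz] at hz
    -- basic facts about a, b, c
    have hS : a + ∑ j, c j = 1 := by
      have := hrow 0
      rwa [Fin.sum_univ_succ] at this
    have hcnn : ∀ j, 0 ≤ c j := fun j => hpos 0 j.succ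
    have hSnn : 0 ≤ ∑ j, c j := Finset.sum_nonneg fun j _ => hcnn j
    have ha0 : 0 ≤ a := hpos 0 0
    have ha1 : a ≤ 1 := by linarith
    have hb1 : b ≤ 1 - a := by
      have h := hcol 0
      rw [Fin.sum_univ_succ, Fin.sum_univ_succ, Fin.succ_zero_eq_one] at h
      have hr : 0 ≤ ∑ i : Fin m, x i.succ.succ 0 :=
        Finset.sum_nonneg fun i _ => hpos _ _
      linarith [h]
    have hprodnn : 0 ≤ ∏ j, c j := Finset.prod_nonneg fun j _ => hcnn j
    set ya : ℝ := (1 - a)/(M+1) with hya'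
    have hMpos : (0:ℝ) < M + 1 := by linarith
    have hya : (M+1)*ya = 1 - a := by
      rw [hya']; field_simp
    have hamgm : ∏ j, c j ≤ ya ^ (m+1) := by
      have h := amgmCE (m+1) c hcnn
      have hcast : ((m+1 : ℕ):ℝ) = M + 1 := by push_cast [hM]; ring
      have hsum : ∑ j, c j = 1 - a := by linarith
      rwa [hcast, hsum] at h
    -- the chain of inequalities
    have step1 : a * b * ∏ j, c j ≤ a * (1-a) * ∏ j, c j := by
      apply mul_le_mul_of_nonneg_right _ hprodnn
      exact mul_le_mul_of_nonneg_left hb1 ha0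
    have step2 : a * (1-a) * ∏ j, c j ≤ a * (1-a) * ya ^ (m+1) := by
      apply mul_le_mul_of_nonneg_left hamgm
      nlinarith
    have step3 : a * (1-a) * ya ^ (m+1) = (M+1) * fCE m ya := by
      rw [← gformCE m ya, hya]
      ring
    have hya0 : 0 ≤ ya := by
      rw [hya']; exact div_nonneg (by linarith) (by linarith)
    have hya1 : ya ≤ 1/(M+1) := by
      rw [hya']
      gcongr
      · linarith
    have step4 : fCE m ya ≤ fCE m t := (fkeyCE m hya0 hya1).1
    have hchain : (M+1) * fCE m ya = (M+1) * fCE m t := by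
      have h4 : (M+1) * fCE m ya ≤ (M+1) * fCE m t :=
        mul_le_mul_of_nonneg_left step4 (le_of_lt hMpos)
      linarith [hz, step1, step2, step3]
    have hfeq : fCE m ya = fCE m t := mul_left_cancel₀ hMpos.ne' hchain
    have hyat : ya = t := (fkeyCE m hya0 hya1).2 hfeq
    -- pin down a
    have h1t : (M+1)*t = (M+2)/(M+3) := by
      rw [ht]; field_simp
    have h2t : 1 - (M+1)*t = 1/(M+3) := by
      rw [h1t]; field_simp; norm_num
    have haval : a = 1/(M+3) := by
      have : 1 - a = (M+2)/(M+3) := by rw [← hya, hyat, h1t]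
      have h3 : (0:ℝ) < M + 3 := by linarith
      field_simp at this ⊢
      linarith
    -- pin down b
    have hPpos : 0 < (M+1) * fCE m t := by
      rw [← gformCE m t, h2t, h1t]
      positivity
    have hPeq : a * b * ∏ j, c j = (M+1) * fCE m t := by
      have hup : a * b * ∏ j, c j ≤ (M+1) * fCE m t := by
        calc a * b * ∏ j, c j ≤ a * (1-a) * ya ^ (m+1) := le_trans step1 step2
          _ = (M+1) * fCE m ya := step3
          _ ≤ (M+1) * fCE m t := mul_le_mul_of_nonneg_left step4 (le_of_lt hMpos)
      linarith [hz]
    have hmid : a * (1-a) * ∏ j, c j = (M+1) * fCE m t := by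
      have hup : a * (1-a) * ∏ j, c j ≤ (M+1) * fCE m t := by
        calc a * (1-a) * ∏ j, c j ≤ a * (1-a) * ya ^ (m+1) := step2
          _ = (M+1) * fCE m ya := step3
          _ ≤ (M+1) * fCE m t := mul_le_mul_of_nonneg_left step4 (le_of_lt hMpos)
      linarith [hz, step1]
    have habc : a * b * ∏ j, c j = a * (1-a) * ∏ j, c j := by rw [hPeq, hmid]
    have hane : a ≠ 0 := by
      intro h
      rw [h, zero_mul, zero_mul] at hPeq
      linarith [hPpos]
    have hcne : (∏ j, c j) ≠ 0 := by
      intro h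
      rw [h, mul_zero] at hPeq
      linarith [hPpos]
    have hbval : b = 1 - a := by
      have hfac : (b - (1-a)) * (a * ∏ j, c j) = 0 := by
        have : a * b * ∏ j, c j - a * (1-a) * ∏ j, c j = (b - (1-a)) * (a * ∏ j, c j) := by
          ring
        rw [← this, habc]; ring
      rcases mul_eq_zero.mp hfac with h | h
      · linarith [sub_eq_zero.mp h]
      · exact absurd h (mul_ne_zero hane hcne)
    have hb2 : b = (M+2)/(M+3) := by
      rw [hbval, haval]
      have h3 : (0:ℝ) < M + 3 := by linarith
      field_simp
      ring
    -- conclusions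
    have hu0 : utilA (uCE m) x 0 = a := utilA_specialCE m x 0 (Or.inl rfl)
    have hu1 : (∑ j, uCE m 0 j * x 1 j) = b := by
      unfold uCE
      simp only [true_or, if_pos, reduceIte, ite_mul, one_mul, zero_mul]
      simp [hb']
    refine ⟨?_, ?_, ?_, ?_⟩
    · rw [hu0, haval]
    · rw [hu1, hb2]
    · rw [hu0, haval, hu1, hb2]
      have h2 : (0:ℝ) < M + 2 := by linarith
      have h3 : (0:ℝ) < M + 3 := by linarith
      field_simp
    · intro j
      by_cases h : j = 0 <;> simp [wCE, h]
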